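/- If (q_1, ..., q_l) is a finite sequence of positive integers of even length l with alternant a, then q_1 + q_2 + ... + q_l ≤ a + 1, with equality if and only if the sequence has the form (a,1), (1,a), or (1, a−k, k−1, 1) for some 2 ≤ k ≤ a−1. -/

import Mathlib

/-- The continuant of a finite sequence of integers. -/
def cont : List ℤ → ℤ
  | [] => 1
  | [q] => q
  | q :: r :: t => q * cont (r :: t) + cont t

/-- The continuant of the sequence with first and last entries removed,
with the convention that it is `0` for sequences of length `≤ 1`. -/
def contMid : List ℤ → ℤ
  | [] => 0
  | [_] => 0
  | _ :: t => cont t.dropLast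

/-- The alternant of a finite sequence of integers. -/
def alternant (l : List ℤ) : ℤ := cont l - contMid l

/-- Pinch the left end of a sequence. -/
def pinchL : List ℤ → List ℤ
  | [] => []
  | [x] => if x = 1 then [x] else [1, x - 1]
  | x :: y :: t => if x = 1 then (y + 1) :: t else 1 :: (x - 1) :: y :: t

/-- Pinch the right end of a sequence. -/
def pinchR (l : List ℤ) : List ℤ := (pinchL l.reverse).reverse

/-- Knead a sequence: remove the leftmost entry, pinch both ends of the
remainder, and append the removed entry on the right. -/
def knead : List ℤ → List ℤ
  | [] => []
  | x :: t => pinchR (pinchL t) ++ [x]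

section AuxLemmas

lemma one_le_cont : ∀ l : List ℤ, (∀ x ∈ l, 0 < x) → 1 ≤ cont l
  | [], _ => by simp [cont]
  | [q], h => by have := h q (by simp); simp [cont]; omega
  | q :: r :: t, h => by
    have h1 := one_le_cont (r :: t) (fun x hx => h x (List.mem_cons_of_mem _ hx))
    have h2 := one_le_cont t (fun x hx => h x (List.mem_cons_of_mem _ (List.mem_cons_of_mem _ hx)))
    have hq := h q (by simp)
    simp only [cont]
    nlinarith

lemma two_le_cont (q r : ℤ) (t : List ℤ) (h : ∀ x ∈ q :: r :: t, 0 < x) :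
    2 ≤ cont (q :: r :: t) := by
  have h1 := one_le_cont (r :: t) (fun x hx => h x (List.mem_cons_of_mem _ hx))
  have h2 := one_le_cont t (fun x hx => h x (List.mem_cons_of_mem _ (List.mem_cons_of_mem _ hx)))
  have hq := h q (by simp)
  simp only [cont]
  nlinarith

lemma eq_one_of_cont : ∀ l : List ℤ, l ≠ [] → (∀ x ∈ l, 0 < x) → cont l = 1 → l = [1]
  | [], h, _, _ => absurd rfl h
  | [q], _, _, h1 => by simp [cont] at h1; rw [h1]
  | q :: r :: t, _, h, h1 => absurd h1 (by have := two_le_cont q r t h; omega)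

lemma cont_concat : ∀ (s : List ℤ) (x : ℤ), s ≠ [] →
    cont (s ++ [x]) = x * cont s + cont s.dropLast
  | [], x, h => absurd rfl h
  | [y], x, _ => by simp [cont]; ring
  | [y, z], x, _ => by simp [cont]; ring
  | y :: z :: w :: r, x, _ => by
    have h1 := cont_concat (z :: w :: r) x (by simp)
    have h2 := cont_concat (w :: r) x (by simp)
    simp only [List.cons_append] at h1 h2 ⊢
    rw [show cont (y :: z :: w :: (r ++ [x])) = y * cont (z :: w :: (r ++ [x])) + cont (w :: (r++[x])) from rfl, h1, h2]
    rw [show (y :: z :: w :: r).dropLast = y :: z :: (w :: r).dropLast from by simp [List.dropLast]]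
    rw [show cont (y :: z :: (w :: r).dropLast) = y * cont (z :: (w :: r).dropLast) + cont ((w :: r).dropLast) from rfl]
    rw [show (z :: w :: r).dropLast = z :: (w :: r).dropLast from by simp [List.dropLast]]
    rw [show cont (y :: z :: w :: r) = y * cont (z :: w :: r) + cont (w :: r) from rfl]
    ring

lemma cont_dropLast_add_one_le (l : List ℤ) (h2 : 2 ≤ l.length) (h : ∀ x ∈ l, 0 < x) :
    cont l.dropLast + 1 ≤ cont l := by
  have hne : l ≠ [] := by rintro rfl; simp at h2
  have hd : l.dropLast ≠ [] := by
    intro hd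
    have := congrArg List.length hd
    simp [List.length_dropLast] at this
    omega
  have key := cont_concat l.dropLast (l.getLast hne) hd
  rw [List.dropLast_append_getLast hne] at key
  have hlast : 0 < l.getLast hne := h _ (List.getLast_mem hne)
  have hdl1 : 1 ≤ cont l.dropLast :=
    one_le_cont _ (fun x hx => h x ((List.dropLast_sublist l).subset hx))
  have hdl2 : 1 ≤ cont l.dropLast.dropLast :=
    one_le_cont _ (fun x hx => h x ((List.dropLast_sublist l).subset ((List.dropLast_sublist _).subset hx)))
  nlinarith


lemma aux : ∀ (N : ℕ) (l : List ℤ), l.sum ≤ (N : ℤ) → (∀ x ∈ l, 0 < x) → Even l.length →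
    l.sum ≤ alternant l + 1 ∧
      (l.sum = alternant l + 1 →
        l = [alternant l, 1] ∨ l = [1, alternant l] ∨
          ∃ k : ℤ, 2 ≤ k ∧ k ≤ alternant l - 1 ∧ l = [1, alternant l - k, k - 1, 1]) := by
  intro N
  induction N with
  | zero =>
    intro l hs hpos heven
    rcases l with _ | ⟨x, t⟩
    · simp [alternant, cont, contMid]
    · exfalso
      have hx := hpos x (by simp)
      have ht : 0 < (x :: t).sum := List.sum_pos _ hpos (by simp)
      push_cast at hs; omega
  | succ N ih =>
    intro l hs hpos heven
    rcases l with _ | ⟨x, _ | ⟨y, _ | ⟨z, _ | ⟨w, r⟩⟩⟩⟩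
    · simp [alternant, cont, contMid]
    · simp at heven
    · -- l = [x, y]
      have hx := hpos x (by simp)
      have hy := hpos y (by simp)
      have hA : alternant [x, y] = x * y := by simp [alternant, cont, contMid]
      rw [hA]
      have hmul : 0 ≤ (x - 1) * (y - 1) := mul_nonneg (by omega) (by omega)
      simp only [List.sum_cons, List.sum_nil, add_zero]
      constructor
      · nlinarith
      · intro heq
        have h0 : (x - 1) * (y - 1) = 0 := by nlinarith
        rcases mul_eq_zero.mp h0 with h1 | h1
        · have : x = 1 := by omega
          subst this
          right; left; norm_num
        · have : y = 1 := by omega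
          subst this
          left; norm_num
    · -- l = [x, y, z] : odd length
      exfalso; simp [Nat.even_iff] at heven
    · -- l = x :: y :: z :: w :: r
      have hx := hpos x (by simp)
      have hy := hpos y (by simp)
      have hz := hpos z (by simp)
      have hw := hpos w (by simp)
      have hr : ∀ u ∈ r, 0 < u := fun u hu => hpos u (by simp [hu])
      have hP : 1 ≤ cont (w :: r) := one_le_cont _ (fun u hu => hpos u (by simp at hu ⊢; tauto))
      have hQ : 1 ≤ cont r := one_le_cont _ (fun u hu => hpos u (by simp [hu]))
      have hS : 1 ≤ cont ((w :: r).dropLast) := one_le_cont _ (fun u hu => by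
        have : u ∈ w :: r := (List.dropLast_sublist _).subset hu
        exact hpos u (by simp at this ⊢; tauto))
      have hRT : cont (z :: (w :: r).dropLast) + 1 ≤ z * cont (w :: r) + cont r := by
        have := cont_dropLast_add_one_le (z :: w :: r) (by simp)
          (fun u hu => hpos u (by simp at hu ⊢; tauto))
        rw [show (z :: w :: r).dropLast = z :: (w :: r).dropLast from by simp [List.dropLast]] at this
        rw [show cont (z :: w :: r) = z * cont (w :: r) + cont r from rfl] at this
        exact this
      have hA : alternant (x :: y :: z :: w :: r) =
          x * (y * (z * cont (w :: r) + cont r) + cont (w :: r))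
            + (z * cont (w :: r) + cont r)
            - (y * cont (z :: (w :: r).dropLast) + cont ((w :: r).dropLast)) := by
        simp [alternant, cont, contMid, List.dropLast]
      have hsum : (x :: y :: z :: w :: r).sum = x + y + z + w + r.sum := by
        simp [List.sum_cons]; ring
      by_cases hx2 : x = 1
      · subst hx2
        -- apply IH to z :: w :: r
        have hTs : (z :: w :: r).sum ≤ (N : ℤ) := by
          have : (z :: w :: r).sum = z + w + r.sum := by simp [List.sum_cons]; ring
          push_cast at hs ⊢
          omega
        have hTpos : ∀ u ∈ z :: w :: r, 0 < u := fun u hu => hpos u (by simp at hu ⊢; tauto)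
        have hTev : Even (z :: w :: r).length := by
          simp only [List.length_cons] at heven ⊢
          rw [Nat.even_iff] at heven ⊢; omega
        obtain ⟨ihle, -⟩ := ih (z :: w :: r) hTs hTpos hTev
        have hAT : alternant (z :: w :: r)
            = z * cont (w :: r) + cont r - cont ((w :: r).dropLast) := by
          simp [alternant, cont, contMid]
        rw [hAT] at ihle
        have hsT : (z :: w :: r).sum = z + w + r.sum := by simp [List.sum_cons]; try ring
        have hprod : 0 ≤ y * (z * cont (w :: r) + cont r - cont (z :: (w :: r).dropLast) - 1) :=
          mul_nonneg (by omega) (by linarith)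
        constructor
        · rw [hA, hsum]
          rw [hsT] at ihle
          nlinarith
        · intro heq
          rw [hA, hsum] at heq
          rw [hsT] at ihle
          have hP1 : cont (w :: r) = 1 := by nlinarith
          have : w :: r = [1] := eq_one_of_cont _ (by simp)
            (fun u hu => hpos u (by simp at hu ⊢; tauto)) hP1
          obtain ⟨hw1, hrn⟩ : w = 1 ∧ r = [] := by simpa using this
          subst hw1; subst hrn
          have hA4 : alternant [1, y, z, 1] = y + z + 1 := by
            simp [alternant, cont, contMid]; ring
          rw [hA4]
          right; right
          refine ⟨z + 1, by omega, by omega, ?_⟩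
          have e1 : y + z + 1 - (z + 1) = y := by ring
          have e2 : z + 1 - 1 = z := by ring
          rw [e1, e2]
      · -- 2 ≤ x
        have hx2' : 2 ≤ x := by omega
        have hls : ((x - 1) :: y :: z :: w :: r).sum ≤ (N : ℤ) := by
          simp only [List.sum_cons] at hs ⊢
          push_cast at hs ⊢; omega
        have hlpos : ∀ u ∈ (x - 1) :: y :: z :: w :: r, 0 < u := by
          intro u hu
          simp at hu
          rcases hu with h | h | h | h | h
          · omega
          · omega
          · omega
          · omega
          · exact hr u h
        have hlev : Even ((x - 1) :: y :: z :: w :: r).length := by simpa using heven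
        obtain ⟨ihle, -⟩ := ih _ hls hlpos hlev
        have hA' : alternant ((x - 1) :: y :: z :: w :: r) =
            (x - 1) * (y * (z * cont (w :: r) + cont r) + cont (w :: r))
              + (z * cont (w :: r) + cont r)
              - (y * cont (z :: (w :: r).dropLast) + cont ((w :: r).dropLast)) := by
          simp [alternant, cont, contMid, List.dropLast]
        rw [hA'] at ihle
        have hsum' : ((x - 1) :: y :: z :: w :: r).sum = x - 1 + y + z + w + r.sum := by
          simp [List.sum_cons]; ring
        rw [hsum'] at ihle
        have hzP : (1:ℤ) ≤ z * cont (w :: r) := by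
          have := mul_le_mul (show (1:ℤ) ≤ z by omega) hP zero_le_one (by omega)
          linarith
        have hyz : (1:ℤ) ≤ y * (z * cont (w :: r) + cont r) := by
          have := mul_le_mul (show (1:ℤ) ≤ y by omega)
            (show (1:ℤ) ≤ z * cont (w :: r) + cont r by linarith) zero_le_one (by omega)
          linarith
        have hle : (x :: y :: z :: w :: r).sum ≤ alternant (x :: y :: z :: w :: r) := by
          rw [hA, hsum]; linarith
        exact ⟨by omega, fun heq => absurd heq (by omega)⟩

end AuxLemmas

theorem sum_le_alternant_add_one (l : List ℤ) (a : ℤ)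
    (hpos : ∀ x ∈ l, 0 < x) (heven : Even l.length) (ha : alternant l = a) :
    l.sum ≤ a + 1 ∧
      (l.sum = a + 1 ↔
        l = [a, 1] ∨ l = [1, a] ∨
          ∃ k : ℤ, 2 ≤ k ∧ k ≤ a - 1 ∧ l = [1, a - k, k - 1, 1]) := by
  subst ha
  obtain ⟨h1, h2⟩ := aux l.sum.toNat l (Int.self_le_toNat _) hpos heven
  refine ⟨h1, h2, ?_⟩
  rintro (h | h | ⟨k, hk1, hk2, h⟩) <;> rw [h] <;>
    simp [alternant, cont, contMid] <;> ring
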